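/- Let G = (V, E) be a finite graph with vertex set V = V₀ ∪ V₁ (disjoint union), constructed from surjections φ₀: {1,...,2k} → V₀ and φ₁: {1,...,2k} → V₁ whose level-set partitions are Π₀ ∨ Π and Π₁ ∨ Π respectively, with edge set E = {{φ₀(i), φ₁(i)} : i = 1,...,2k}. If #(Π₀ ∨ Π₁ ∨ Π) = 1, then G is connected. -/
import Mathlib


/-- Number of parts of a partition of `α`, encoded as a setoid. -/
noncomputable def numParts {α : Type*} (S : Setoid α) : ℕ := Nat.card (Quotient S)

/-- Lemma 3.3: let `Π₀, Π₁, Π` be partitions of `{1,...,2k}`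
(encoded as setoids on `Fin (2k)`), let `φ₀ : {1,...,2k} → V₀` and
`φ₁ : {1,...,2k} → V₁` be surjections whose level-set partitions are
`Π₀ ∨ Π` and `Π₁ ∨ Π` respectively (`V₀`, `V₁` disjoint, encoded via a sum
type), and let `G` be the graph on `V₀ ⊔ V₁` with edges
`{φ₀(i), φ₁(i)}`, `i = 1,...,2k`.  If `#(Π₀ ∨ Π₁ ∨ Π) = 1` then `G` is
connected. -/
theorem stmt_5 (k : ℕ) (hk : 0 < k) (P₀ P₁ P : Setoid (Fin (2 * k)))
    {V₀ V₁ : Type*} (φ₀ : Fin (2 * k) → V₀) (φ₁ : Fin (2 * k) → V₁)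
    (hs₀ : Function.Surjective φ₀) (hs₁ : Function.Surjective φ₁)
    (hlevel₀ : ∀ i j, φ₀ i = φ₀ j ↔ (P₀ ⊔ P).r i j)
    (hlevel₁ : ∀ i j, φ₁ i = φ₁ j ↔ (P₁ ⊔ P).r i j)
    (G : SimpleGraph (V₀ ⊕ V₁))
    (hAdj : ∀ a b, G.Adj a b ↔ ∃ i : Fin (2 * k),
      (a = Sum.inl (φ₀ i) ∧ b = Sum.inr (φ₁ i)) ∨
      (b = Sum.inl (φ₀ i) ∧ a = Sum.inr (φ₁ i)))
    (hjoin : numParts (P₀ ⊔ P₁ ⊔ P) = 1) :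
    G.Connected := by
  have hnz : 0 < 2 * k := by omega
  have i0 : Fin (2 * k) := ⟨0, hnz⟩
  -- adjacency between inl (φ₀ i) and inr (φ₁ i)
  have hadj : ∀ i : Fin (2 * k), G.Adj (Sum.inl (φ₀ i)) (Sum.inr (φ₁ i)) := by
    intro i
    exact (hAdj _ _).2 ⟨i, Or.inl ⟨rfl, rfl⟩⟩
  -- the reachability setoid pulled back
  let S : Setoid (Fin (2 * k)) :=
    { r := fun i j => G.Reachable (Sum.inl (φ₀ i)) (Sum.inl (φ₀ j))
      iseqv := ⟨fun i => SimpleGraph.Reachable.refl _,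
        fun h => h.symm, fun h h' => h.trans h'⟩ }
  have h0 : P₀ ⊔ P ≤ S := by
    intro i j hij
    have : φ₀ i = φ₀ j := (hlevel₀ i j).2 hij
    show G.Reachable _ _
    rw [this]
  have h1 : P₁ ⊔ P ≤ S := by
    intro i j hij
    have : φ₁ i = φ₁ j := (hlevel₁ i j).2 hij
    show G.Reachable (Sum.inl (φ₀ i)) (Sum.inl (φ₀ j))
    exact ((hadj i).reachable.trans (this ▸ (hadj j).symm.reachable))
  have hle : P₀ ⊔ P₁ ⊔ P ≤ S := by
    have : P₀ ⊔ P₁ ⊔ P = (P₀ ⊔ P) ⊔ (P₁ ⊔ P) := by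
      rw [sup_sup_distrib_right]
    rw [this]
    exact sup_le h0 h1
  -- numParts = 1 means everything is related
  have hall : ∀ i j : Fin (2 * k), (P₀ ⊔ P₁ ⊔ P).r i j := by
    intro i j
    have hne : Nonempty (Quotient (P₀ ⊔ P₁ ⊔ P)) := ⟨Quotient.mk _ i0⟩
    have hfin : Nat.card (Quotient (P₀ ⊔ P₁ ⊔ P)) = 1 := hjoin
    have hsub : Subsingleton (Quotient (P₀ ⊔ P₁ ⊔ P)) :=
      Nat.card_eq_one_iff_unique.mp hfin |>.1
    have := hsub.elim (Quotient.mk _ i) (Quotient.mk _ j)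
    exact Quotient.exact this
  have hreach : ∀ i j : Fin (2 * k),
      G.Reachable (Sum.inl (φ₀ i)) (Sum.inl (φ₀ j)) := fun i j => hle (hall i j)
  have key : ∀ a : V₀ ⊕ V₁, G.Reachable a (Sum.inl (φ₀ i0)) := by
    intro a
    match a with
    | Sum.inl v =>
      obtain ⟨i, rfl⟩ := hs₀ v
      exact hreach i i0
    | Sum.inr v =>
      obtain ⟨i, rfl⟩ := hs₁ v
      exact (hadj i).symm.reachable.trans (hreach i i0)
  haveI : Nonempty (V₀ ⊕ V₁) := ⟨Sum.inl (φ₀ i0)⟩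
  exact SimpleGraph.Connected.mk (fun a b => (key a).trans (key b).symm)
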